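/- arXiv:2404.03426 — 2 statements merged into one kernel-verified Lean document; each statement's English description precedes it below -/
import Mathlib

section
/- Let T and T' be decision trees over ℝ^d (possibly T = T'), u a leaf of T, v a leaf of T', x ∈ ℝ^d, S ⊆ {1,…,d}, and let x' be the perturbed input obtained from x by adding independent noise δ_q with continuous c.d.f. F_q to each coordinate q ∈ S and leaving coordinates outside S unchanged. Writing l_{u,v,q}, r_{u,v,q} for the endpoints of the interval I_{u,q} ∩ I_{v,q} whenever this intersection is nonempty, the probability that the evaluation of T on x' reaches u and simultaneously the evaluation of T' on x' reaches v equals Π(u,v) := (Π_{q∈(Q_u∪Q_v)∖S} 𝟙[x_q ∈ I_{u,q} ∩ I_{v,q}]) · Π_{q∈(Q_u∪Q_v)∩S} (F̄_q(r_{u,v,q} − x_q) − F̄_q(l_{u,v,q} − x_q)), where F̄_q extends F_q by F̄_q(−∞) := 0 and F̄_q(+∞) := 1, and where the joint probability is 0 whenever I_{u,q} ∩ I_{v,q} = ∅ for some q ∈ Q_u ∪ Q_v. -/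
open MeasureTheory ProbabilityTheory

/-- A decision tree over `ℝ^d`: each internal node has a split feature `q`, a threshold `t`,
a left child `a` and a right child `b`; each leaf carries a real value `y`. -/
inductive DTree (d : ℕ) : Type
  | leaf (y : ℝ) : DTree d
  | node (q : Fin d) (t : ℝ) (a b : DTree d) : DTree d

namespace DTree

variable {d : ℕ}

/-- Evaluation of a decision tree: at `node q t a b` descend to `a` if `x q < t`, else to `b`. -/
noncomputable def eval : DTree d → (Fin d → ℝ) → ℝ
  | leaf y, _ => y
  | node q t a b, x => if x q < t then a.eval x else b.eval x

/-- The root-to-leaf path (`false` = left, `true` = right) followed when evaluating on `x`. -/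
noncomputable def evalPath : DTree d → (Fin d → ℝ) → List Bool
  | leaf _, _ => []
  | node q t a b, x => if x q < t then false :: a.evalPath x else true :: b.evalPath x

/-- The subtree reached by following the path `p` from the root (if any). -/
def subtreeAt : DTree d → List Bool → Option (DTree d)
  | T, [] => some T
  | leaf _, _ :: _ => none
  | node _ _ a _, false :: p => a.subtreeAt p
  | node _ _ _ b, true :: p => b.subtreeAt p

/-- `p` is the position of a leaf of `T`. -/
def IsLeafPath (T : DTree d) (p : List Bool) : Prop :=
  ∃ y : ℝ, T.subtreeAt p = some (leaf y)

/-- The value of the leaf at position `p` (junk value `0` if `p` is not a leaf position). -/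
def leafVal (T : DTree d) (p : List Bool) : ℝ :=
  match T.subtreeAt p with
  | some (leaf y) => y
  | _ => 0

/-- The set of positions of leaves of `T`. -/
def leafPaths : DTree d → Finset (List Bool)
  | leaf _ => {[]}
  | node _ _ a b => a.leafPaths.image (false :: ·) ∪ b.leafPaths.image (true :: ·)

/-- `Q_w`: the set of split features of the internal nodes strictly above position `p`. -/
def pathFeatures : DTree d → List Bool → Finset (Fin d)
  | _, [] => ∅
  | leaf _, _ :: _ => ∅
  | node q _ a _, false :: p => insert q (a.pathFeatures p)
  | node q _ _ b, true :: p => insert q (b.pathFeatures p)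

/-- Left endpoint of the interval `I_{w,q}`: start from `⊥ = -∞` and take the max of the
thresholds of nodes splitting on `q` where the path turns right. -/
noncomputable def lo : DTree d → List Bool → Fin d → EReal
  | _, [], _ => ⊥
  | leaf _, _ :: _, _ => ⊥
  | node _ _ a _, false :: p, q => a.lo p q
  | node q' t _ b, true :: p, q => if q' = q then max (t : EReal) (b.lo p q) else b.lo p q

/-- Right endpoint of the interval `I_{w,q}`: start from `⊤ = +∞` and take the min of the
thresholds of nodes splitting on `q` where the path turns left. -/
noncomputable def hi : DTree d → List Bool → Fin d → EReal
  | _, [], _ => ⊤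
  | leaf _, _ :: _, _ => ⊤
  | node q' t a _, false :: p, q => if q' = q then min (t : EReal) (a.hi p q) else a.hi p q
  | node _ _ _ b, true :: p, q => b.hi p q

/-- The interval `I_{w,q} ⊆ ℝ` (left-closed, right-open, with possibly infinite endpoints). -/
def interval (T : DTree d) (p : List Bool) (q : Fin d) : Set ℝ :=
  {x : ℝ | T.lo p q ≤ (x : EReal) ∧ (x : EReal) < T.hi p q}

end DTree
namespace DTree
variable {d : ℕ}

theorem mem_interval_node_false (q : Fin d) (t : ℝ) (a b : DTree d) (p : List Bool)
    (x : Fin d → ℝ) :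
    (∀ q', x q' ∈ (node q t a b).interval (false :: p) q') ↔
      (x q < t ∧ ∀ q', x q' ∈ a.interval p q') := by
  constructor
  · intro h
    have hq := h q
    simp only [interval, lo, hi, eq_self_iff_true, if_true, Set.mem_setOf_eq, lt_min_iff, lt_inf_iff] at hq
    refine ⟨by exact_mod_cast hq.2.1, fun q' => ?_⟩
    have := h q'
    by_cases hqq : q = q' <;>
      simp_all [interval, lo, hi, lt_min_iff, lt_inf_iff]
  · rintro ⟨h1, h2⟩ q'
    have := h2 q'
    by_cases hqq : q = q' <;>
      simp_all [interval, lo, hi, lt_min_iff, lt_inf_iff, h1]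

theorem mem_interval_node_true (q : Fin d) (t : ℝ) (a b : DTree d) (p : List Bool)
    (x : Fin d → ℝ) :
    (∀ q', x q' ∈ (node q t a b).interval (true :: p) q') ↔
      (t ≤ x q ∧ ∀ q', x q' ∈ b.interval p q') := by
  constructor
  · intro h
    have hq := h q
    simp only [interval, lo, hi, eq_self_iff_true, if_true, Set.mem_setOf_eq, max_le_iff, sup_le_iff] at hq
    refine ⟨by exact_mod_cast hq.1.1, fun q' => ?_⟩
    have := h q'
    by_cases hqq : q = q' <;>
      simp_all [interval, lo, hi, max_le_iff, sup_le_iff]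
  · rintro ⟨h1, h2⟩ q'
    have := h2 q'
    by_cases hqq : q = q' <;>
      simp_all [interval, lo, hi, max_le_iff, sup_le_iff, h1]

theorem evalPath_eq_iff : ∀ (T : DTree d) (p : List Bool), T.IsLeafPath p →
    ∀ x : Fin d → ℝ, (T.evalPath x = p ↔ ∀ q, x q ∈ T.interval p q)
  | leaf y, [], _, x => by
      simp [evalPath, interval, lo, hi]
  | leaf y, c :: p, hp, x => by
      obtain ⟨y', hy⟩ := hp; simp [subtreeAt] at hy
  | node q t a b, [], hp, x => by
      obtain ⟨y', hy⟩ := hp; simp [subtreeAt] at hy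
  | node q t a b, false :: p, hp, x => by
      have IH := evalPath_eq_iff a p hp x
      rw [mem_interval_node_false, ← IH, evalPath]
      split <;> rename_i hxt <;> simp [hxt]
  | node q t a b, true :: p, hp, x => by
      have IH := evalPath_eq_iff b p hp x
      rw [mem_interval_node_true, ← IH, evalPath]
      split <;> rename_i hxt <;> simp [hxt, not_lt.mp, le_of_not_gt]

end DTree

/-- `F̄`: a c.d.f. `F : ℝ → ℝ` extended to `EReal` by `F̄(-∞) = 0` and `F̄(+∞) = 1`. -/
noncomputable def extendCDF (F : ℝ → ℝ) (t : EReal) : ℝ :=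
  if t = ⊥ then 0 else if t = ⊤ then 1 else F t.toReal
open Filter Topology in
lemma meas_lt_eq_meas_le {Ω : Type*} [MeasurableSpace Ω] (μ : MeasureTheory.Measure Ω)
    [MeasureTheory.IsProbabilityMeasure μ] (δ : Ω → ℝ)
    (F : ℝ → ℝ) (hF : F = fun t => (μ {ω | δ ω ≤ t}).toReal) (hFc : Continuous F)
    (t : ℝ) : μ {ω | δ ω < t} = ENNReal.ofReal (F t) := by
  have hof : ∀ s : ℝ, μ {ω | δ ω ≤ s} = ENNReal.ofReal (F s) := by
    intro s; rw [hF]; exact (ENNReal.ofReal_toReal (measure_ne_top μ _)).symm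
  have hmono : Monotone fun n : ℕ => {ω | δ ω ≤ t - 1/(n+1)} := by
    intro m n hmn ω h
    simp only [Set.mem_setOf_eq] at *
    have h1 : (1:ℝ)/(n+1) ≤ 1/(m+1) := by
      apply one_div_le_one_div_of_le (by positivity)
      exact_mod_cast Nat.succ_le_succ hmn
    linarith
  have hun : (⋃ n : ℕ, {ω | δ ω ≤ t - 1/(n+1)}) = {ω | δ ω < t} := by
    ext ω; simp only [Set.mem_iUnion, Set.mem_setOf_eq]
    constructor
    · rintro ⟨n, h⟩
      have : (0:ℝ) < 1/((n:ℝ)+1) := by positivity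
      linarith
    · intro h
      obtain ⟨n, hn⟩ := exists_nat_one_div_lt (show 0 < t - δ ω by linarith)
      exact ⟨n, by push_cast at hn ⊢; linarith⟩
  have h1 := MeasureTheory.tendsto_measure_iUnion_atTop (μ := μ) hmono
  rw [hun] at h1
  have h2 : Tendsto (fun n : ℕ => μ {ω | δ ω ≤ t - 1/(n+1)}) atTop
      (𝓝 (ENNReal.ofReal (F t))) := by
    simp only [hof]
    refine (ENNReal.continuous_ofReal.tendsto _).comp ?_
    refine (hFc.tendsto t).comp ?_
    have : Tendsto (fun n : ℕ => 1/((n:ℝ)+1)) atTop (𝓝 0) :=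
      tendsto_one_div_add_atTop_nhds_zero_nat
    simpa using tendsto_const_nhds.sub this
  exact tendsto_nhds_unique h1 h2

lemma F_mono {Ω : Type*} [MeasurableSpace Ω] (μ : MeasureTheory.Measure Ω)
    [MeasureTheory.IsProbabilityMeasure μ] (δ : Ω → ℝ)
    (F : ℝ → ℝ) (hF : F = fun t => (μ {ω | δ ω ≤ t}).toReal) : Monotone F := by
  intro s t hst
  rw [hF]
  exact ENNReal.toReal_mono (measure_ne_top μ _)
    (MeasureTheory.measure_mono fun ω h => le_trans h hst)

lemma F_nonneg {Ω : Type*} [MeasurableSpace Ω] (μ : MeasureTheory.Measure Ω)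
    (δ : Ω → ℝ) (F : ℝ → ℝ) (hF : F = fun t => (μ {ω | δ ω ≤ t}).toReal) (t : ℝ) :
    0 ≤ F t := by rw [hF]; exact ENNReal.toReal_nonneg

lemma F_le_one {Ω : Type*} [MeasurableSpace Ω] (μ : MeasureTheory.Measure Ω)
    [MeasureTheory.IsProbabilityMeasure μ]
    (δ : Ω → ℝ) (F : ℝ → ℝ) (hF : F = fun t => (μ {ω | δ ω ≤ t}).toReal) (t : ℝ) :
    F t ≤ 1 := by
  rw [hF]
  have := MeasureTheory.prob_le_one (μ := μ) (s := {ω | δ ω ≤ t})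
  calc (μ {ω | δ ω ≤ t}).toReal ≤ (1 : ENNReal).toReal := ENNReal.toReal_mono (by simp) this
    _ = 1 := by simp

lemma meas_interval {Ω : Type*} [MeasurableSpace Ω] (μ : MeasureTheory.Measure Ω)
    [MeasureTheory.IsProbabilityMeasure μ] (δ : Ω → ℝ) (hδ : Measurable δ)
    (F : ℝ → ℝ) (hF : F = fun t => (μ {ω | δ ω ≤ t}).toReal) (hFc : Continuous F)
    (x : ℝ) (L R : EReal)
    (hne : {y : ℝ | L ≤ (y : EReal) ∧ (y : EReal) < R}.Nonempty) :
    (μ {ω | L ≤ ((x + δ ω : ℝ) : EReal) ∧ ((x + δ ω : ℝ) : EReal) < R}).toReal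
      = extendCDF F (R - (x : EReal)) - extendCDF F (L - (x : EReal)) := by
  have hlt := meas_lt_eq_meas_le μ δ F hF hFc
  have hmono := F_mono μ δ F hF
  have hnn := F_nonneg μ δ F hF
  have hle1 := F_le_one μ δ F hF
  induction L with
  | top => obtain ⟨y, hy1, hy2⟩ := hne; exact absurd (lt_of_le_of_lt hy1 hy2) (by simp)
  | bot =>
    induction R with
    | bot => obtain ⟨y, _, hy2⟩ := hne; exact absurd hy2 (by simp)
    | top =>
      have : {ω | (⊥ : EReal) ≤ ((x + δ ω : ℝ) : EReal) ∧ ((x + δ ω : ℝ) : EReal) < ⊤}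
          = Set.univ := by
        ext ω
        simp only [Set.mem_setOf_eq, bot_le, true_and, Set.mem_univ, iff_true]
        exact EReal.coe_lt_top _
      rw [this]
      simp [extendCDF, EReal.top_sub_coe, EReal.bot_sub]
    | coe r =>
      have hset : {ω | (⊥ : EReal) ≤ ((x + δ ω : ℝ) : EReal) ∧ ((x + δ ω : ℝ) : EReal) < (r : EReal)}
          = {ω | δ ω < r - x} := by
        ext ω; simp only [Set.mem_setOf_eq, bot_le, true_and, EReal.coe_lt_coe_iff]
        constructor <;> intro h <;> linarith
      rw [hset, hlt, ENNReal.toReal_ofReal (hnn _)]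
      simp [extendCDF, EReal.bot_sub, ← EReal.coe_sub]
  | coe l =>
    induction R with
    | bot => obtain ⟨y, _, hy2⟩ := hne; exact absurd hy2 (by simp)
    | top =>
      have hset : {ω | (l : EReal) ≤ ((x + δ ω : ℝ) : EReal) ∧ ((x + δ ω : ℝ) : EReal) < ⊤}
          = {ω | δ ω < l - x}ᶜ := by
        ext ω
        simp only [Set.mem_setOf_eq, EReal.coe_lt_top, and_true, Set.mem_compl_iff, not_lt,
          EReal.coe_le_coe_iff]
        constructor <;> intro h <;> linarith
      rw [hset, MeasureTheory.measure_compl (s := {ω | δ ω < l - x}) (hδ measurableSet_Iio) (measure_ne_top μ _)]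
      rw [MeasureTheory.measure_univ, hlt, ENNReal.toReal_sub_of_le
        (by simpa using hle1 (l - x)) (by simp)]
      rw [ENNReal.toReal_ofReal (hnn _)]
      simp [extendCDF, EReal.top_sub_coe, ← EReal.coe_sub]
    | coe r =>
      obtain ⟨y, hy1, hy2⟩ := hne
      rw [EReal.coe_le_coe_iff] at hy1
      rw [EReal.coe_lt_coe_iff] at hy2
      have hlr : l - x ≤ r - x := by linarith
      have hset : {ω | (l : EReal) ≤ ((x + δ ω : ℝ) : EReal) ∧ ((x + δ ω : ℝ) : EReal) < (r : EReal)}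
          = {ω | δ ω < r - x} \ {ω | δ ω < l - x} := by
        ext ω
        simp only [Set.mem_setOf_eq, Set.mem_diff, EReal.coe_le_coe_iff, EReal.coe_lt_coe_iff,
          not_lt]
        constructor <;> intro h <;> constructor <;> linarith [h.1, h.2]
      rw [hset, MeasureTheory.measure_diff (s₁ := {ω | δ ω < r - x}) (s₂ := {ω | δ ω < l - x}) (fun ω h => lt_of_lt_of_le h hlr)
        ((hδ measurableSet_Iio).nullMeasurableSet) (measure_ne_top μ _)]
      rw [hlt, hlt, ENNReal.toReal_sub_of_le (ENNReal.ofReal_le_ofReal (hmono hlr)) (by simp)]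
      rw [ENNReal.toReal_ofReal (hnn _), ENNReal.toReal_ofReal (hnn _)]
      simp [extendCDF, ← EReal.coe_sub]
namespace DTree
set_option linter.dupNamespace false

theorem lo_eq_bot : ∀ (T : DTree d) (p : List Bool) (q : Fin d),
    q ∉ T.pathFeatures p → T.lo p q = ⊥
  | leaf _, [], q, _ => rfl
  | node _ _ _ _, [], q, _ => rfl
  | leaf _, _ :: _, q, _ => rfl
  | node q' t a b, false :: p, q, h => by
      simp only [pathFeatures, Finset.mem_insert, not_or] at h
      exact lo_eq_bot a p q h.2
  | node q' t a b, true :: p, q, h => by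
      simp only [pathFeatures, Finset.mem_insert, not_or] at h
      show (if q' = q then max (t : EReal) (b.lo p q) else b.lo p q) = ⊥
      rw [if_neg (fun hh => h.1 hh.symm)]
      exact lo_eq_bot b p q h.2

theorem hi_eq_top : ∀ (T : DTree d) (p : List Bool) (q : Fin d),
    q ∉ T.pathFeatures p → T.hi p q = ⊤
  | leaf _, [], q, _ => rfl
  | node _ _ _ _, [], q, _ => rfl
  | leaf _, _ :: _, q, _ => rfl
  | node q' t a b, false :: p, q, h => by
      simp only [pathFeatures, Finset.mem_insert, not_or] at h
      show (if q' = q then min (t : EReal) (a.hi p q) else a.hi p q) = ⊤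
      rw [if_neg (fun hh => h.1 hh.symm)]
      exact hi_eq_top a p q h.2
  | node q' t a b, true :: p, q, h => by
      simp only [pathFeatures, Finset.mem_insert, not_or] at h
      exact hi_eq_top b p q h.2

theorem interval_eq_univ (T : DTree d) (p : List Bool) (q : Fin d)
    (h : q ∉ T.pathFeatures p) : T.interval p q = Set.univ := by
  ext y
  simp only [interval, lo_eq_bot T p q h, hi_eq_top T p q h, bot_le, true_and,
    Set.mem_setOf_eq, Set.mem_univ, iff_true]
  exact EReal.coe_lt_top y

theorem event_mem_iff (T T' : DTree d) (u v : List Bool) (hu : T.IsLeafPath u)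
    (hv : T'.IsLeafPath v) (z : Fin d → ℝ) :
    (T.evalPath z = u ∧ T'.evalPath z = v) ↔
      ∀ q ∈ T.pathFeatures u ∪ T'.pathFeatures v,
        z q ∈ T.interval u q ∩ T'.interval v q := by
  rw [evalPath_eq_iff T u hu z, evalPath_eq_iff T' v hv z]
  constructor
  · rintro ⟨h1, h2⟩ q _; exact ⟨h1 q, h2 q⟩
  · intro h
    constructor <;> intro q
    · by_cases hq : q ∈ T.pathFeatures u
      · exact (h q (Finset.mem_union_left _ hq)).1
      · rw [interval_eq_univ T u q hq]; trivial
    · by_cases hq : q ∈ T'.pathFeatures v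
      · exact (h q (Finset.mem_union_right _ hq)).2
      · rw [interval_eq_univ T' v q hq]; trivial

theorem measurableSet_interval (T : DTree d) (p : List Bool) (q : Fin d) :
    MeasurableSet (T.interval p q) := by
  have h1 : MeasurableSet ((fun y : ℝ => (y : EReal)) ⁻¹' Set.Ici (T.lo p q)) :=
    measurable_coe_real_ereal measurableSet_Ici
  have h2 : MeasurableSet ((fun y : ℝ => (y : EReal)) ⁻¹' Set.Iio (T.hi p q)) :=
    measurable_coe_real_ereal measurableSet_Iio
  exact h1.inter h2

theorem inter_interval_eq (T T' : DTree d) (u v : List Bool) (q : Fin d) :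
    T.interval u q ∩ T'.interval v q
      = {y : ℝ | max (T.lo u q) (T'.lo v q) ≤ (y : EReal)
          ∧ (y : EReal) < min (T.hi u q) (T'.hi v q)} := by
  ext y
  simp only [interval, Set.mem_inter_iff, Set.mem_setOf_eq, max_le_iff, lt_min_iff, sup_le_iff,
    le_inf_iff, lt_inf_iff]
  tauto

end DTree

/-- Let `u` be a leaf of `T` and `v` a leaf of `T'` (possibly `T = T'`),
`x ∈ ℝ^d`, `S ⊆ [d]`, and let `x'` be obtained from `x` by adding independent noise `δ_q` with
continuous c.d.f. `F_q` on each coordinate `q ∈ S`. If all intersections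
`I_{u,q} ∩ I_{v,q}`, `q ∈ Q_u ∪ Q_v`, are nonempty (so that their endpoints `l_{u,v,q} =
max(l_{u,q}, l_{v,q})` and `r_{u,v,q} = min(r_{u,q}, r_{v,q})` are well defined), the joint
probability that `T` reaches `u` and `T'` reaches `v` on `x'` equals
`Π(u,v) = (Π_{q ∈ (Q_u∪Q_v) \ S} 𝟙[x_q ∈ I_{u,q} ∩ I_{v,q}]) ·
Π_{q ∈ (Q_u∪Q_v) ∩ S} (F̄_q(r_{u,v,q} − x_q) − F̄_q(l_{u,v,q} − x_q))`; and the joint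
probability is `0` whenever some intersection `I_{u,q} ∩ I_{v,q}`, `q ∈ Q_u ∪ Q_v`, is empty. -/
theorem dtree_joint_reach_prob_closed_form {d : ℕ} (T T' : DTree d) (u v : List Bool)
    (hu : T.IsLeafPath u) (hv : T'.IsLeafPath v) (x : Fin d → ℝ) (S : Finset (Fin d))
    {Ω : Type*} [MeasurableSpace Ω] (μ : MeasureTheory.Measure Ω)
    [MeasureTheory.IsProbabilityMeasure μ]
    (δ : Fin d → Ω → ℝ) (hδmeas : ∀ q ∈ S, Measurable (δ q))
    (hindep : ProbabilityTheory.iIndepFun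
      (fun q : {q : Fin d // q ∈ S} => δ q.1) μ)
    (F : Fin d → ℝ → ℝ) (hF : ∀ q ∈ S, F q = fun t => (μ {ω | δ q ω ≤ t}).toReal)
    (hFcont : ∀ q ∈ S, Continuous (F q))
    (x' : Ω → Fin d → ℝ)
    (hx' : x' = fun ω q => if q ∈ S then x q + δ q ω else x q) :
    ((∀ q ∈ T.pathFeatures u ∪ T'.pathFeatures v,
        (T.interval u q ∩ T'.interval v q).Nonempty) →
      (μ {ω | T.evalPath (x' ω) = u ∧ T'.evalPath (x' ω) = v}).toReal
        = (∏ q ∈ (T.pathFeatures u ∪ T'.pathFeatures v) \ S,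
              (T.interval u q ∩ T'.interval v q).indicator (fun _ => (1 : ℝ)) (x q)) *
          ∏ q ∈ (T.pathFeatures u ∪ T'.pathFeatures v) ∩ S,
            (extendCDF (F q) (min (T.hi u q) (T'.hi v q) - (x q : EReal))
              - extendCDF (F q) (max (T.lo u q) (T'.lo v q) - (x q : EReal)))) ∧
    ((∃ q ∈ T.pathFeatures u ∪ T'.pathFeatures v, T.interval u q ∩ T'.interval v q = ∅) →
      μ {ω | T.evalPath (x' ω) = u ∧ T'.evalPath (x' ω) = v} = 0) := by
  classical
  set K : Finset (Fin d) := T.pathFeatures u ∪ T'.pathFeatures v with hK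
  have hx'S : ∀ (ω : Ω) (q : Fin d), q ∈ S → x' ω q = x q + δ q ω := by
    intro ω q hq; rw [hx']; simp [hq]
  have hx'NS : ∀ (ω : Ω) (q : Fin d), q ∉ S → x' ω q = x q := by
    intro ω q hq; rw [hx']; simp [hq]
  have hEv : {ω | T.evalPath (x' ω) = u ∧ T'.evalPath (x' ω) = v}
      = ⋂ q ∈ K, {ω | x' ω q ∈ (T.interval u q ∩ T'.interval v q)} := by
    ext ω
    simp only [Set.mem_setOf_eq, Set.mem_iInter]
    exact DTree.event_mem_iff T T' u v hu hv (x' ω)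
  constructor
  · -- main formula
    intro hne
    rw [hEv]
    by_cases hall : ∀ q ∈ K \ S, x q ∈ (T.interval u q ∩ T'.interval v q)
    · -- all indicators are one
      have hprod1 : (∏ q ∈ K \ S, ((T.interval u q ∩ T'.interval v q)).indicator (fun _ => (1 : ℝ)) (x q)) = 1 :=
        Finset.prod_eq_one fun q hq => Set.indicator_of_mem (hall q hq) _
      have hEv2 : (⋂ q ∈ K, {ω | x' ω q ∈ (T.interval u q ∩ T'.interval v q)}) = ⋂ q ∈ K ∩ S, {ω | x' ω q ∈ (T.interval u q ∩ T'.interval v q)} := by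
        ext ω
        simp only [Set.mem_iInter]
        constructor
        · intro h q hq; exact h q (Finset.mem_inter.mp hq).1
        · intro h q hq
          by_cases hqS : q ∈ S
          · exact h q (Finset.mem_inter.mpr ⟨hq, hqS⟩)
          · show x' ω q ∈ (T.interval u q ∩ T'.interval v q)
            rw [hx'NS ω q hqS]
            exact hall q (Finset.mem_sdiff.mpr ⟨hq, hqS⟩)
      set J : Finset {q : Fin d // q ∈ S} :=
        (K ∩ S).attach.image
          (fun z => (⟨z.1, (Finset.mem_inter.mp z.2).2⟩ : {q : Fin d // q ∈ S})) with hJ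
      set Aset : {q : Fin d // q ∈ S} → Set Ω :=
        fun j => {ω | x j.1 + δ j.1 ω ∈ T.interval u j.1 ∩ T'.interval v j.1} with hA
      have hmemJ : ∀ j : {q : Fin d // q ∈ S}, j ∈ J ↔ j.1 ∈ K ∩ S := by
        intro j
        constructor
        · intro hj
          obtain ⟨z, _, hz⟩ := Finset.mem_image.mp hj
          rw [← hz]; exact z.2
        · intro hj
          exact Finset.mem_image.mpr ⟨⟨j.1, hj⟩, Finset.mem_attach _ _, Subtype.ext rfl⟩
      have hEv3 : (⋂ q ∈ K ∩ S, {ω | x' ω q ∈ (T.interval u q ∩ T'.interval v q)}) = ⋂ j ∈ J, Aset j := by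
        ext ω
        simp only [Set.mem_iInter]
        constructor
        · intro h j hj
          have hm := (hmemJ j).1 hj
          have h2 := h j.1 hm
          show x j.1 + δ j.1 ω ∈ (T.interval u j.1 ∩ T'.interval v j.1)
          rw [← hx'S ω j.1 j.2]; exact h2
        · intro h q hq
          have hqS := (Finset.mem_inter.mp hq).2
          have h2 := h ⟨q, hqS⟩ ((hmemJ _).2 hq)
          show x' ω q ∈ (T.interval u q ∩ T'.interval v q)
          rw [hx'S ω q hqS]; exact h2
      have hmeasB : ∀ q : Fin d, MeasurableSet (T.interval u q ∩ T'.interval v q) :=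
        fun q => (DTree.measurableSet_interval T u q).inter (DTree.measurableSet_interval T' v q)
      have hindep2 : μ (⋂ j ∈ J, Aset j) = ∏ j ∈ J, μ (Aset j) := by
        refine hindep.meas_biInter fun j hj => ?_
        exact ⟨(fun y => x j.1 + y) ⁻¹' (T.interval u j.1 ∩ T'.interval v j.1), measurable_const_add (x j.1) (hmeasB j.1), rfl⟩
      have hprodJ : ∏ j ∈ J, μ (Aset j) = ∏ q ∈ K ∩ S, μ {ω | x q + δ q ω ∈ (T.interval u q ∩ T'.interval v q)} := by
        rw [hJ, Finset.prod_image ?hinj]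
        case hinj =>
          intro z _ z' _ h
          simp only [Subtype.mk.injEq] at h
          exact Subtype.ext h
        exact Finset.prod_attach (K ∩ S) (fun q => μ {ω | x q + δ q ω ∈ (T.interval u q ∩ T'.interval v q)})
      rw [hEv2, hEv3, hindep2, hprodJ, ENNReal.toReal_prod, hprod1, one_mul]
      refine Finset.prod_congr rfl fun q hq => ?_
      have hqS := (Finset.mem_inter.mp hq).2
      have hqK := (Finset.mem_inter.mp hq).1
      have hBq : T.interval u q ∩ T'.interval v q = {y : ℝ | max (T.lo u q) (T'.lo v q) ≤ (y : EReal)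
          ∧ (y : EReal) < min (T.hi u q) (T'.hi v q)} :=
        DTree.inter_interval_eq T T' u v q
      have hne' := hne q hqK
      rw [hBq] at hne'
      have := meas_interval μ (δ q) (hδmeas q hqS) (F q) (hF q hqS) (hFcont q hqS) (x q)
        (max (T.lo u q) (T'.lo v q)) (min (T.hi u q) (T'.hi v q)) hne'
      rw [hBq]
      exact this
    · -- some indicator is zero
      push_neg at hall
      obtain ⟨q0, hq0K, hq0⟩ := hall
      have h0 : {ω : Ω | x' ω q0 ∈ (T.interval u q0 ∩ T'.interval v q0)} = ∅ := by
        ext ω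
        simp only [Set.mem_setOf_eq, Set.mem_empty_iff_false, iff_false]
        rw [hx'NS ω q0 (Finset.mem_sdiff.mp hq0K).2]
        exact hq0
      have hz : μ (⋂ q ∈ K, {ω | x' ω q ∈ (T.interval u q ∩ T'.interval v q)}) = 0 :=
        MeasureTheory.measure_mono_null
          (Set.biInter_subset_of_mem (Finset.mem_sdiff.mp hq0K).1) (by rw [h0]; simp)
      rw [hz]
      rw [Finset.prod_eq_zero hq0K (Set.indicator_of_notMem hq0 _)]
      simp
  · -- empty intersection case
    rintro ⟨q, hqK, hq⟩
    rw [hEv]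
    have h0 : {ω : Ω | x' ω q ∈ T.interval u q ∩ T'.interval v q} = ∅ := by
      simp only [hq]; simp
    exact MeasureTheory.measure_mono_null (Set.biInter_subset_of_mem hqK)
      (by rw [h0]; simp)
end

section
/- Let f be the output of a tree ensemble (T_1,…,T_m) over ℝ^d with combined leaf set 𝓛 = ∪_{i=1}^m 𝓛(T_i), let x ∈ ℝ^d, S ⊆ {1,…,d}, c := f(x), and let x' be the perturbed input obtained from x by adding independent noise δ_q with continuous c.d.f. F_q to each coordinate q ∈ S and leaving coordinates outside S unchanged. Then the squared prediction gap admits the exact closed form PG²(x,S) = E[(f(x') − f(x))²] = c² + Σ_{u,v∈𝓛, u≠v} y_u·y_v·Π(u,v) + Σ_{u∈𝓛} Π(u)·y_u·(y_u − 2c), where Π(u,v) is the probability that x' simultaneously reaches leaf u (in its tree) and leaf v (in its tree), and Π(u) is the probability that x' reaches leaf u in its tree. -/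
open MeasureTheory ProbabilityTheory

namespace DTree

variable {d : ℕ}

lemma subtreeAt_evalPath (T : DTree d) (x : Fin d → ℝ) :
    T.subtreeAt (T.evalPath x) = some (leaf (T.eval x)) := by
  induction T with
  | leaf y => simp [evalPath, subtreeAt, eval]
  | node q t a b ha hb =>
    simp only [evalPath, eval]
    split <;> simpa [subtreeAt]

lemma leafVal_evalPath (T : DTree d) (x : Fin d → ℝ) :
    T.leafVal (T.evalPath x) = T.eval x := by
  rw [leafVal, subtreeAt_evalPath]

lemma evalPath_mem_leafPaths (T : DTree d) (x : Fin d → ℝ) :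
    T.evalPath x ∈ T.leafPaths := by
  induction T with
  | leaf y => simp [evalPath, leafPaths]
  | node q t a b ha hb =>
    simp only [evalPath, leafPaths, Finset.mem_union, Finset.mem_image]
    split
    · exact Or.inl ⟨_, ha, rfl⟩
    · exact Or.inr ⟨_, hb, rfl⟩

lemma measurableSet_evalPath_eq {Ω : Type*} [MeasurableSpace Ω] (T : DTree d)
    (x' : Ω → Fin d → ℝ) (hx' : ∀ q, Measurable fun ω => x' ω q) (p : List Bool) :
    MeasurableSet {ω | T.evalPath (x' ω) = p} := by
  induction T generalizing p with
  | leaf y =>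
    rcases p with _ | ⟨b, p⟩
    · simp [evalPath]
    · simp [evalPath]
  | node q t a b ha hb =>
    rcases p with _ | ⟨c, p⟩
    · convert MeasurableSet.empty
      ext ω
      simp only [evalPath, Set.mem_setOf_eq, Set.mem_empty_iff_false, iff_false]
      split <;> simp
    · cases c
      · have h : {ω | (node q t a b).evalPath (x' ω) = false :: p}
            = {ω | x' ω q < t} ∩ {ω | a.evalPath (x' ω) = p} := by
          ext ω
          simp only [evalPath, Set.mem_setOf_eq, Set.mem_inter_iff]
          split <;> simp_all
        rw [h]
        exact (measurableSet_lt (hx' q) measurable_const).inter (ha p)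
      · have h : {ω | (node q t a b).evalPath (x' ω) = true :: p}
            = {ω | ¬ x' ω q < t} ∩ {ω | b.evalPath (x' ω) = p} := by
          ext ω
          simp only [evalPath, Set.mem_setOf_eq, Set.mem_inter_iff]
          split <;> simp_all
        rw [h]
        exact ((measurableSet_lt (hx' q) measurable_const).compl).inter (hb p)

end DTree

lemma sq_sum_indicator_expand {ι Ω : Type*} [DecidableEq ι] (L : Finset ι) (Y : ι → ℝ) (A : ι → Set Ω)
    (ω : Ω) (c : ℝ) :
    (∑ u ∈ L, Y u * (A u).indicator (fun _ => (1 : ℝ)) ω - c) ^ 2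
      = c ^ 2
        + (∑ u ∈ L, ∑ v ∈ L.erase u,
            Y u * Y v * ((A u ∩ A v).indicator (fun _ => (1 : ℝ)) ω))
        + ∑ u ∈ L, (A u).indicator (fun _ => (1 : ℝ)) ω * Y u * (Y u - 2 * c) := by
  classical
  set χ : ι → ℝ := fun u => if ω ∈ A u then 1 else 0 with hχ
  have hind : ∀ u, (A u).indicator (fun _ => (1 : ℝ)) ω = χ u := fun u => by
    by_cases h : ω ∈ A u <;> simp [hχ, Set.indicator, h]
  have hind2 : ∀ u v, (A u ∩ A v).indicator (fun _ => (1 : ℝ)) ω = χ u * χ v := fun u v => by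
    by_cases hu : ω ∈ A u <;> by_cases hv : ω ∈ A v <;> simp [hχ, Set.indicator, hu, hv]
  simp only [hind, hind2]
  have hχχ : ∀ u, χ u * χ u = χ u := fun u => by
    by_cases h : ω ∈ A u <;> simp [hχ, h]
  have hsq : (∑ u ∈ L, Y u * χ u) ^ 2 = ∑ u ∈ L, ∑ v ∈ L, Y u * Y v * (χ u * χ v) := by
    rw [sq, Finset.sum_mul_sum]
    exact Finset.sum_congr rfl fun u _ => Finset.sum_congr rfl fun v _ => by ring
  have hsplit : ∑ u ∈ L, ∑ v ∈ L, Y u * Y v * (χ u * χ v)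
      = (∑ u ∈ L, Y u * Y u * χ u) + ∑ u ∈ L, ∑ v ∈ L.erase u, Y u * Y v * (χ u * χ v) := by
    rw [← Finset.sum_add_distrib]
    refine Finset.sum_congr rfl fun u hu => ?_
    rw [← Finset.add_sum_erase _ _ hu, hχχ]
  have htail : (∑ u ∈ L, Y u * Y u * χ u) - (∑ u ∈ L, Y u * χ u) * (2 * c)
      = ∑ u ∈ L, χ u * Y u * (Y u - 2 * c) := by
    rw [Finset.sum_mul, ← Finset.sum_sub_distrib]
    exact Finset.sum_congr rfl fun u _ => by ring
  rw [sub_sq, hsq, hsplit]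
  linear_combination htail

/-- For the output `f` of a tree ensemble `(T_1, …, T_m)` with combined leaf
set `𝓛`, a point `x`, a set `S` of perturbed features, `c = f(x)`, and the perturbed input `x'`
(independent noise with continuous c.d.f.s added on coordinates in `S`), the squared prediction
gap admits the exact closed form
`PG²(x,S) = E[(f(x') − f(x))²]
  = c² + Σ_{u ≠ v ∈ 𝓛} y_u y_v Π(u,v) + Σ_{u ∈ 𝓛} Π(u) y_u (y_u − 2c)`,
where `Π(u,v)` is the probability that `x'` simultaneously reaches leaf `u` (in its tree) and
leaf `v` (in its tree), and `Π(u)` is the probability that `x'` reaches leaf `u` in its tree. -/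
theorem pg_squared_closed_form {d m : ℕ} (Ts : Fin m → DTree d)
    (x : Fin d → ℝ) (S : Finset (Fin d))
    {Ω : Type*} [MeasurableSpace Ω] (μ : MeasureTheory.Measure Ω)
    [MeasureTheory.IsProbabilityMeasure μ]
    (δ : Fin d → Ω → ℝ) (hδmeas : ∀ q ∈ S, Measurable (δ q))
    (hindep : ProbabilityTheory.iIndepFun
      (m := fun _ : {q : Fin d // q ∈ S} => (inferInstance : MeasurableSpace ℝ))
      (fun q : {q : Fin d // q ∈ S} => δ q.1) μ)
    (hFcont : ∀ q ∈ S, Continuous fun t : ℝ => (μ {ω | δ q ω ≤ t}).toReal)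
    (x' : Ω → Fin d → ℝ)
    (hx' : x' = fun ω q => if q ∈ S then x q + δ q ω else x q)
    (c : ℝ) (hc : c = ∑ i, (Ts i).eval x)
    (L : Finset ((_ : Fin m) × List Bool))
    (hL : L = Finset.univ.sigma fun i : Fin m => (Ts i).leafPaths) :
    ∫ ω, (∑ i, (Ts i).eval (x' ω) - c) ^ 2 ∂μ
      = c ^ 2
        + (∑ u ∈ L, ∑ v ∈ L.erase u,
            (Ts u.1).leafVal u.2 * (Ts v.1).leafVal v.2 *
              (μ {ω | (Ts u.1).evalPath (x' ω) = u.2 ∧ (Ts v.1).evalPath (x' ω) = v.2}).toReal)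
        + ∑ u ∈ L,
            (μ {ω | (Ts u.1).evalPath (x' ω) = u.2}).toReal *
              (Ts u.1).leafVal u.2 * ((Ts u.1).leafVal u.2 - 2 * c) := by
  classical
  -- coordinates of `x'` are measurable
  have hx'meas : ∀ q, Measurable fun ω => x' ω q := by
    intro q
    by_cases hq : q ∈ S
    · simpa [hx', hq] using (hδmeas q hq).const_add (x q)
    · simpa [hx', hq] using (measurable_const : Measurable fun _ : Ω => x q)
  set A : (Σ _ : Fin m, List Bool) → Set Ω :=
    fun u => {ω | (Ts u.1).evalPath (x' ω) = u.2} with hAdef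
  have hA : ∀ u, MeasurableSet (A u) := fun u =>
    DTree.measurableSet_evalPath_eq (Ts u.1) x' hx'meas u.2
  set Y : (Σ _ : Fin m, List Bool) → ℝ := fun u => (Ts u.1).leafVal u.2 with hYdef
  -- the ensemble output as a sum of leaf-indicators
  have h_f : ∀ ω, ∑ i, (Ts i).eval (x' ω)
      = ∑ u ∈ L, Y u * (A u).indicator (fun _ => (1 : ℝ)) ω := by
    intro ω
    rw [hL, Finset.sum_sigma]
    refine Finset.sum_congr rfl fun i _ => ?_
    have hmem := DTree.evalPath_mem_leafPaths (Ts i) (x' ω)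
    have : ∀ p ∈ (Ts i).leafPaths,
        Y ⟨i, p⟩ * (A ⟨i, p⟩).indicator (fun _ => (1 : ℝ)) ω
          = if (Ts i).evalPath (x' ω) = p then (Ts i).leafVal p else 0 := by
      intro p _
      by_cases h : (Ts i).evalPath (x' ω) = p <;>
        simp [hAdef, hYdef, Set.indicator, h]
    rw [Finset.sum_congr rfl this, Finset.sum_ite_eq, if_pos hmem,
      DTree.leafVal_evalPath]
  -- pointwise expansion of the square
  have hpt : ∀ ω, (∑ i, (Ts i).eval (x' ω) - c) ^ 2
      = c ^ 2
        + (∑ u ∈ L, ∑ v ∈ L.erase u,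
            Y u * Y v * ((A u ∩ A v).indicator (fun _ => (1 : ℝ)) ω))
        + ∑ u ∈ L, (A u).indicator (fun _ => (1 : ℝ)) ω * Y u * (Y u - 2 * c) := by
    intro ω
    rw [h_f ω]
    exact sq_sum_indicator_expand L Y A ω c
  -- integrability of the pieces
  have hint1 : ∀ u ∈ L, ∀ v ∈ L.erase u,
      Integrable (fun ω => Y u * Y v * ((A u ∩ A v).indicator (fun _ => (1 : ℝ)) ω)) μ :=
    fun u _ v _ => ((integrable_const (1 : ℝ)).indicator ((hA u).inter (hA v))).const_mul _
  have hint2 : ∀ u ∈ L,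
      Integrable (fun ω => (A u).indicator (fun _ => (1 : ℝ)) ω * Y u * (Y u - 2 * c)) μ := by
    intro u _
    have : (fun ω => (A u).indicator (fun _ => (1 : ℝ)) ω * Y u * (Y u - 2 * c))
        = fun ω => ((A u).indicator (fun _ => (1 : ℝ)) ω) * (Y u * (Y u - 2 * c)) := by
      funext ω; ring
    rw [this]
    exact ((integrable_const (1 : ℝ)).indicator (hA u)).mul_const _
  -- compute the integral
  calc ∫ ω, (∑ i, (Ts i).eval (x' ω) - c) ^ 2 ∂μ
      = ∫ ω, (c ^ 2
          + (∑ u ∈ L, ∑ v ∈ L.erase u,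
              Y u * Y v * ((A u ∩ A v).indicator (fun _ => (1 : ℝ)) ω))
          + ∑ u ∈ L, (A u).indicator (fun _ => (1 : ℝ)) ω * Y u * (Y u - 2 * c)) ∂μ :=
        integral_congr_ae (Filter.Eventually.of_forall hpt)
    _ = c ^ 2
        + (∑ u ∈ L, ∑ v ∈ L.erase u,
            Y u * Y v * (μ (A u ∩ A v)).toReal)
        + ∑ u ∈ L, (μ (A u)).toReal * Y u * (Y u - 2 * c) := by
        have hI1 : Integrable (fun ω => ∑ u ∈ L, ∑ v ∈ L.erase u,
            Y u * Y v * ((A u ∩ A v).indicator (fun _ => (1 : ℝ)) ω)) μ :=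
          integrable_finset_sum _ fun u hu => integrable_finset_sum _ (hint1 u hu)
        have hI2 : Integrable (fun ω => ∑ u ∈ L,
            (A u).indicator (fun _ => (1 : ℝ)) ω * Y u * (Y u - 2 * c)) μ :=
          integrable_finset_sum _ hint2
        have hI0 : Integrable (fun ω => c ^ 2 + ∑ u ∈ L, ∑ v ∈ L.erase u,
            Y u * Y v * ((A u ∩ A v).indicator (fun _ => (1 : ℝ)) ω)) μ :=
          (integrable_const _).add hI1
        rw [integral_add hI0 hI2, integral_add (integrable_const _) hI1, integral_const,
          integral_finset_sum _ fun u hu => integrable_finset_sum _ (hint1 u hu),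
          integral_finset_sum _ hint2]
        simp only [probReal_univ, measure_univ, ENNReal.toReal_one, smul_eq_mul, one_mul]
        congr 1
        · congr 1
          refine Finset.sum_congr rfl fun u hu => ?_
          rw [integral_finset_sum _ (hint1 u hu)]
          refine Finset.sum_congr rfl fun v _ => ?_
          rw [integral_const_mul, integral_indicator_const _ ((hA u).inter (hA v)), measureReal_def,
            smul_eq_mul, mul_one]
        · refine Finset.sum_congr rfl fun u _ => ?_
          have heq : (fun ω => (A u).indicator (fun _ => (1 : ℝ)) ω * Y u * (Y u - 2 * c))
              = fun ω => ((A u).indicator (fun _ => (1 : ℝ)) ω) * (Y u * (Y u - 2 * c)) := by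
            funext ω; ring
          rw [heq, integral_mul_const, integral_indicator_const _ (hA u), measureReal_def,
            smul_eq_mul, mul_one, mul_assoc]
    _ = _ := rfl
end
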